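/- arXiv:math/0005310 — 2 statements merged into one kernel-verified Lean document; each statement's English description precedes it below -/
import Mathlib

section
/- Let L/K be a finite Galois extension with group G, let W be a valuation ring of L lying over a valuation ring V of K with residue characteristic p > 0, and let 𝔓 be the maximal ideal of W. Define the inertia group T = { σ ∈ G : σ(W) = W and σ induces the identity on W/𝔓 } and the ramification group R = { σ ∈ T : σ(x)/x ≡ 1 mod 𝔓 for all nonzero x ∈ L }. Then R is the unique p-Sylow subgroup of T, and the quotient T/R is an abelian group of order prime to p. -/
section Defs

variable (K : Type*) {L : Type*} [Field K] [Field L] [Algebra K L]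

/-- The inertia group of a valuation subring `W` of `L` in `Gal(L/K)`: automorphisms
stabilizing `W` and acting trivially on the residue field `W/𝔓`, i.e. with
`σ x - x ∈ 𝔓` for all `x ∈ W` (membership in the maximal ideal `𝔓` being expressed by
`W.valuation (·) < 1`). -/
def inertiaGrp (W : ValuationSubring L) : Subgroup (L ≃ₐ[K] L) where
  carrier := {σ | (∀ x : L, σ x ∈ W ↔ x ∈ W) ∧
    ∀ x : L, x ∈ W → W.valuation (σ x - x) < 1}
  one_mem' := by
    refine ⟨fun x => Iff.rfl, fun x hx => ?_⟩
    simp only [AlgEquiv.one_apply, sub_self, map_zero]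
    exact zero_lt_one
  mul_mem' := by
    rintro a b ⟨ha1, ha2⟩ ⟨hb1, hb2⟩
    refine ⟨fun x => (ha1 (b x)).trans (hb1 x), fun x hx => ?_⟩
    have h1 : W.valuation (a (b x) - b x) < 1 := ha2 (b x) ((hb1 x).mpr hx)
    have h2 := hb2 x hx
    have h3 := (W.valuation.map_add (a (b x) - b x) (b x - x)).trans_lt
      (max_lt h1 h2)
    simpa [sub_add_sub_cancel] using h3
  inv_mem' := by
    rintro a ⟨ha1, ha2⟩
    have key : ∀ x : L, a ((a⁻¹ : L ≃ₐ[K] L) x) = x := fun x => a.apply_symm_apply x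
    have hiff : ∀ x : L, (a⁻¹ : L ≃ₐ[K] L) x ∈ W ↔ x ∈ W := by
      intro x
      have := ha1 ((a⁻¹ : L ≃ₐ[K] L) x)
      rw [key x] at this
      exact this.symm
    refine ⟨hiff, fun x hx => ?_⟩
    have hy : (a⁻¹ : L ≃ₐ[K] L) x ∈ W := (hiff x).mpr hx
    have h4 := ha2 _ hy
    rw [key x] at h4
    have : (a⁻¹ : L ≃ₐ[K] L) x - x = -(x - (a⁻¹ : L ≃ₐ[K] L) x) := by ring
    rw [this, Valuation.map_neg]
    exact h4

/-- The ramification group of a valuation subring `W` of `L` in `Gal(L/K)`: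
`R = {σ ∈ T : σ(x)/x ≡ 1 mod 𝔓 for all nonzero x ∈ L}`. -/
def ramificationGrp (W : ValuationSubring L) : Subgroup (L ≃ₐ[K] L) where
  carrier := {σ | σ ∈ inertiaGrp K W ∧
    ∀ x : L, x ≠ 0 → W.valuation (σ x / x - 1) < 1}
  one_mem' := by
    refine ⟨(inertiaGrp K W).one_mem, fun x hx => ?_⟩
    simp only [AlgEquiv.one_apply, div_self hx, sub_self, map_zero]
    exact zero_lt_one
  mul_mem' := by
    rintro a b ⟨haT, ha2⟩ ⟨hbT, hb2⟩
    refine ⟨mul_mem haT hbT, fun x hx => ?_⟩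
    have hbx : b x ≠ 0 := fun h => hx (by simpa using congrArg b.symm (by simpa using h))
    have hA := ha2 (b x) hbx
    have hB := hb2 x hx
    set A := a (b x) / b x with hAdef
    set B := b x / x with hBdef
    have hprod : W.valuation ((A - 1) * (B - 1)) < 1 := by
      rw [Valuation.map_mul]
      calc W.valuation (A - 1) * W.valuation (B - 1)
          ≤ 1 * W.valuation (B - 1) := by have := hA.le; gcongr
        _ = W.valuation (B - 1) := one_mul _
        _ < 1 := hB
    have hAB : A * B = a (b x) / x := div_mul_div_cancel₀ hbx
    have heq : (a * b) x / x - 1 = (A - 1) * (B - 1) + (A - 1) + (B - 1) := by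
      show a (b x) / x - 1 = _
      rw [← hAB]; ring
    rw [heq]
    refine (W.valuation.map_add _ _).trans_lt (max_lt ?_ hB)
    exact (W.valuation.map_add _ _).trans_lt (max_lt hprod hA)
  inv_mem' := by
    rintro a ⟨haT, ha2⟩
    refine ⟨inv_mem haT, fun x hx => ?_⟩
    set y := (a⁻¹ : L ≃ₐ[K] L) x with hy
    have key : a y = x := a.apply_symm_apply x
    have hy0 : y ≠ 0 := fun h => hx (by rw [← key, h, map_zero])
    have h1 : W.valuation (x / y - 1) < 1 := by
      have := ha2 y hy0
      rwa [key] at this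
    have hval1 : W.valuation (x / y) = 1 := by
      by_contra hne
      have : W.valuation (x / y - 1) = max (W.valuation (x / y)) 1 := by
        rw [sub_eq_add_neg]
        rw [Valuation.map_add_of_distinct_val]
        · simp
        · simpa using hne
      rw [this] at h1
      exact absurd h1 (not_lt.mpr (le_max_right _ _))
    have hval2 : W.valuation (y / x) = 1 := by
      have hmul : W.valuation (x / y) * W.valuation (y / x) = 1 := by
        rw [← Valuation.map_mul]
        field_simp
        exact Valuation.map_one _
      rwa [hval1, one_mul] at hmul
    have heq : y / x - 1 = -((x / y - 1) * (y / x)) := by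
      field_simp
      ring
    rw [heq, Valuation.map_neg, Valuation.map_mul, hval2, mul_one]
    exact h1

end Defs

section Aux

open IsLocalRing

variable {K L : Type*} [Field K] [Field L] [Algebra K L]

lemma val_le_iff_div_mem (W : ValuationSubring L) {a b : L} (hb : b ≠ 0) :
    W.valuation a ≤ W.valuation b ↔ a / b ∈ W := by
  rw [← W.valuation_le_one_iff, map_div₀, div_le_one₀]
  exact zero_lt_iff.mpr ((Valuation.ne_zero_iff _).mpr hb)

variable [FiniteDimensional K L]

lemma val_comp_le_aux (W : ValuationSubring L) {σ : L ≃ₐ[K] L}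
    (hσ : σ ∈ inertiaGrp K W) (x : L) (h : W.valuation (σ x) ≤ W.valuation x) :
    W.valuation (σ x) = W.valuation x := by
  by_cases hx : x = 0
  · simp [hx]
  have hxi : ∀ i : ℕ, (σ ^ i) x ≠ 0 := fun i h0 =>
    hx ((σ ^ i).injective (show (σ ^ i) x = (σ ^ i) 0 by rw [h0, map_zero]))
  have step : ∀ i : ℕ, W.valuation ((σ ^ (i + 1)) x) ≤ W.valuation ((σ ^ i) x) := by
    intro i
    rw [val_le_iff_div_mem W (hxi i)]
    have hpow : (σ ^ (i + 1)) x = (σ ^ i) (σ x) := by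
      rw [pow_succ, AlgEquiv.mul_apply]
    have hrw : (σ ^ (i + 1)) x / (σ ^ i) x = (σ ^ i) (σ x / x) := by
      rw [map_div₀, hpow]
    rw [hrw, (pow_mem hσ i).1]
    exact (val_le_iff_div_mem W hx).mp h
  have chain : ∀ i : ℕ, W.valuation ((σ ^ (i + 1)) x) ≤ W.valuation (σ x) := by
    intro i
    induction i with
    | zero => simpa using le_refl _
    | succ n ih => exact le_trans (step (n + 1)) ih
  have hlast : W.valuation x ≤ W.valuation (σ x) := by
    have hc := chain (orderOf σ - 1)
    rw [Nat.sub_add_cancel (orderOf_pos σ), pow_orderOf_eq_one σ,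
      AlgEquiv.one_apply] at hc
    exact hc
  exact le_antisymm h hlast

lemma val_comp_eq (W : ValuationSubring L) {σ : L ≃ₐ[K] L}
    (hσ : σ ∈ inertiaGrp K W) (x : L) :
    W.valuation (σ x) = W.valuation x := by
  rcases le_total (W.valuation (σ x)) (W.valuation x) with h | h
  · exact val_comp_le_aux W hσ x h
  · have hrw : (σ⁻¹ : L ≃ₐ[K] L) (σ x) = x := σ.symm_apply_apply x
    have hinv := val_comp_le_aux W (inv_mem hσ) (σ x) (by rw [hrw]; exact h)
    rw [hrw] at hinv
    exact hinv.symm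

lemma div_mem_of_inertia (W : ValuationSubring L) {σ : L ≃ₐ[K] L}
    (hσ : σ ∈ inertiaGrp K W) (x : L) : σ x / x ∈ W := by
  rw [← W.valuation_le_one_iff, map_div₀]
  by_cases hx : x = 0
  · simp [hx]
  rw [val_comp_eq W hσ x, div_self (fun h0 => hx ((Valuation.zero_iff _).mp h0))]

open Classical in
/-- The residue of `σ x / x` in the residue field of `W`. -/
noncomputable def theta (W : ValuationSubring L) (σ : L ≃ₐ[K] L) (x : L) :
    IsLocalRing.ResidueField W :=
  if h : σ x / x ∈ W then IsLocalRing.residue W ⟨σ x / x, h⟩ else 0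

lemma theta_def (W : ValuationSubring L) {σ : L ≃ₐ[K] L} {x : L} (h : σ x / x ∈ W) :
    theta W σ x = IsLocalRing.residue W ⟨σ x / x, h⟩ := by
  rw [theta]
  exact dif_pos h

lemma residue_zero_iff' (W : ValuationSubring L) (y : W) :
    IsLocalRing.residue W y = 0 ↔ W.valuation (y : L) < 1 := by
  rw [← W.valuation_lt_one_iff]
  exact Ideal.Quotient.eq_zero_iff_mem

lemma residue_one_iff' (W : ValuationSubring L) (y : W) :
    IsLocalRing.residue W y = 1 ↔ W.valuation ((y : L) - 1) < 1 := by
  have h1 : ((y : L) - 1) = ((y - 1 : W) : L) := by push_cast; ring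
  rw [h1, ← residue_zero_iff' W (y - 1), map_sub, map_one, sub_eq_zero]

lemma theta_eq_one_iff (W : ValuationSubring L) {σ : L ≃ₐ[K] L}
    (hσ : σ ∈ inertiaGrp K W) (x : L) :
    theta W σ x = 1 ↔ W.valuation (σ x / x - 1) < 1 := by
  rw [theta_def W (div_mem_of_inertia W hσ x), residue_one_iff']

lemma mem_ramification_iff (W : ValuationSubring L) (σ : L ≃ₐ[K] L) :
    σ ∈ ramificationGrp K W ↔
      σ ∈ inertiaGrp K W ∧ ∀ x : L, x ≠ 0 → theta W σ x = 1 := by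
  constructor
  · rintro ⟨h1, h2⟩
    exact ⟨h1, fun x hx => (theta_eq_one_iff W h1 x).mpr (h2 x hx)⟩
  · rintro ⟨h1, h2⟩
    exact ⟨h1, fun x hx => (theta_eq_one_iff W h1 x).mp (h2 x hx)⟩

lemma theta_val_one (W : ValuationSubring L) {σ : L ≃ₐ[K] L}
    (hσ : σ ∈ inertiaGrp K W) {u : L} (hu : W.valuation u = 1) :
    theta W σ u = 1 := by
  have hu0 : u ≠ 0 := fun h => by simp [h] at hu
  rw [theta_eq_one_iff W hσ]
  have humem : u ∈ W := W.mem_of_valuation_le_one u hu.le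
  have h2 := hσ.2 u humem
  have : W.valuation (σ u / u - 1) = W.valuation (σ u - u) / W.valuation u := by
    rw [← map_div₀]
    congr 1
    field_simp
  rw [this, hu, div_one]
  exact h2

lemma theta_ne_zero (W : ValuationSubring L) {σ : L ≃ₐ[K] L}
    (hσ : σ ∈ inertiaGrp K W) {x : L} (hx : x ≠ 0) :
    theta W σ x ≠ 0 := by
  rw [theta_def W (div_mem_of_inertia W hσ x), Ne, residue_zero_iff']
  have : W.valuation (σ x / x) = 1 := by
    rw [map_div₀, val_comp_eq W hσ x,
      div_self (fun h0 => hx ((Valuation.zero_iff _).mp h0))]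
  rw [this]
  exact lt_irrefl 1

lemma theta_mul_right (W : ValuationSubring L) (σ : L ≃ₐ[K] L) {x y : L}
    (hxy : σ x / x ∈ W) (hy : σ y / y ∈ W) (hx0 : x ≠ 0) (hy0 : y ≠ 0) :
    theta W σ (x * y) = theta W σ x * theta W σ y := by
  have hmem : σ (x * y) / (x * y) ∈ W := by
    have : σ (x * y) / (x * y) = (σ x / x) * (σ y / y) := by
      rw [map_mul]; field_simp; try ring
    rw [this]; exact mul_mem hxy hy
  rw [theta_def W hmem, theta_def W hxy, theta_def W hy, ← map_mul]
  congr 1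
  ext
  push_cast
  rw [map_mul]; field_simp; try ring

lemma theta_mul_left (W : ValuationSubring L) {σ τ : L ≃ₐ[K] L}
    (hσ : σ ∈ inertiaGrp K W) (hτ : τ ∈ inertiaGrp K W) {x : L} (hx : x ≠ 0) :
    theta W (σ * τ) x = theta W σ x * theta W τ x := by
  have hτx0 : τ x ≠ 0 := fun h0 =>
    hx (τ.injective (show τ x = τ 0 by rw [h0, map_zero]))
  have hmem : (σ * τ) x / x ∈ W := div_mem_of_inertia W (mul_mem hσ hτ) x
  have hmemστ : σ (τ x) / τ x ∈ W := div_mem_of_inertia W hσ (τ x)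
  have hmemτ : τ x / x ∈ W := div_mem_of_inertia W hτ x
  have key : theta W (σ * τ) x = theta W σ (τ x) * theta W τ x := by
    rw [theta_def W hmem, theta_def W hmemστ, theta_def W hmemτ, ← map_mul]
    congr 1
    ext
    push_cast
    show σ (τ x) / x = σ (τ x) / τ x * (τ x / x)
    field_simp
  rw [key]
  congr 1
  -- theta W σ (τ x) = theta W σ x
  have hvτ : W.valuation (τ x / x) = 1 := by
    rw [map_div₀, val_comp_eq W hτ x,
      div_self (fun h0 => hx ((Valuation.zero_iff _).mp h0))]
  have hτu0 : τ x / x ≠ 0 := div_ne_zero hτx0 hx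
  have hrw : τ x = (τ x / x) * x := by field_simp
  calc theta W σ (τ x) = theta W σ ((τ x / x) * x) := by rw [← hrw]
    _ = theta W σ (τ x / x) * theta W σ x :=
        theta_mul_right W σ (div_mem_of_inertia W hσ _) (div_mem_of_inertia W hσ _) hτu0 hx
    _ = 1 * theta W σ x := by rw [theta_val_one W hσ hvτ]
    _ = theta W σ x := one_mul _

lemma theta_one (W : ValuationSubring L) {x : L} (hx : x ≠ 0) :
    theta W (1 : L ≃ₐ[K] L) x = 1 := by
  have hmem : (1 : L ≃ₐ[K] L) x / x ∈ W := by
    show x / x ∈ W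
    rw [div_self hx]; exact one_mem W
  rw [theta_def W hmem]
  have : (⟨(1 : L ≃ₐ[K] L) x / x, hmem⟩ : W) = 1 := by
    ext; show x / x = 1; rw [div_self hx]
  rw [this, map_one]

lemma theta_pow (W : ValuationSubring L) {σ : L ≃ₐ[K] L}
    (hσ : σ ∈ inertiaGrp K W) {x : L} (hx : x ≠ 0) (n : ℕ) :
    theta W (σ ^ n) x = theta W σ x ^ n := by
  induction n with
  | zero => simpa using theta_one W hx
  | succ m ih =>
    rw [pow_succ, theta_mul_left W (pow_mem hσ m) hσ hx, ih, pow_succ]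

lemma theta_inv (W : ValuationSubring L) {σ : L ≃ₐ[K] L}
    (hσ : σ ∈ inertiaGrp K W) {x : L} (hx : x ≠ 0) :
    theta W σ⁻¹ x = (theta W σ x)⁻¹ := by
  have h := theta_mul_left W (inv_mem hσ) hσ hx
  rw [inv_mul_cancel] at h
  rw [theta_one W hx] at h
  exact eq_inv_of_mul_eq_one_left h.symm

/-- The natural local homomorphism `V →+* W` when `W` lies over `V`. -/
def liftVW (V : ValuationSubring K) (W : ValuationSubring L)
    (hVW : W.comap (algebraMap K L) = V) : V →+* W :=
  RingHom.codRestrict ((algebraMap K L).comp V.subtype) W.toSubring (fun a => by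
    have ha : (a : K) ∈ W.comap (algebraMap K L) := hVW.symm ▸ a.2
    exact ha)

lemma liftVW_isLocalHom (V : ValuationSubring K) (W : ValuationSubring L)
    (hVW : W.comap (algebraMap K L) = V) : IsLocalHom (liftVW V W hVW) := by
  constructor
  intro a h
  obtain ⟨w, hw⟩ := isUnit_iff_exists_inv.mp h
  have hw' : algebraMap K L (a : K) * (w : L) = 1 := congrArg Subtype.val hw
  have ha0 : (a : K) ≠ 0 := fun h0 => by simp [h0] at hw'
  have hwl : (w : L) = algebraMap K L ((a : K)⁻¹) := by
    rw [map_inv₀]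
    exact eq_inv_of_mul_eq_one_right hw'
  have hinvW : (a : K)⁻¹ ∈ W.comap (algebraMap K L) :=
    ValuationSubring.mem_comap.mpr (hwl ▸ w.2)
  rw [hVW] at hinvW
  refine isUnit_iff_exists_inv.mpr ⟨⟨(a : K)⁻¹, hinvW⟩, Subtype.ext ?_⟩
  show (a : K) * (a : K)⁻¹ = 1
  exact mul_inv_cancel₀ ha0

lemma charP_residue_W (V : ValuationSubring K) (W : ValuationSubring L)
    (hVW : W.comap (algebraMap K L) = V)
    (p : ℕ) [CharP (IsLocalRing.ResidueField V) p] :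
    CharP (IsLocalRing.ResidueField W) p := by
  haveI := liftVW_isLocalHom V W hVW
  exact charP_of_injective_ringHom
    (IsLocalRing.ResidueField.map (liftVW V W hVW)).injective p

lemma cast_ne_zero_residue_W (V : ValuationSubring K) (W : ValuationSubring L)
    (hVW : W.comap (algebraMap K L) = V)
    (p : ℕ) (hp : p.Prime) [CharP (IsLocalRing.ResidueField V) p]
    {q : ℕ} (hq : ¬ p ∣ q) : ((q : ℕ) : IsLocalRing.ResidueField W) ≠ 0 := by
  haveI := charP_residue_W V W hVW p
  rw [Ne, CharP.cast_eq_zero_iff (IsLocalRing.ResidueField W) p q]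
  exact hq

lemma cast_ne_zero_L (W : ValuationSubring L) {q : ℕ}
    (hq : ((q : ℕ) : IsLocalRing.ResidueField W) ≠ 0) : ((q : ℕ) : L) ≠ 0 := by
  intro h0
  apply hq
  have h1 : ((q : ℕ) : W) = 0 := by
    have : (((q : ℕ) : W) : L) = ((q : ℕ) : L) := by push_cast; ring
    exact Subtype.ext (by rw [this, h0]; rfl)
  rw [← map_natCast (IsLocalRing.residue W) q, h1, map_zero]

/-- No element of prime order `q ≠ p` in the ramification group. -/
lemma no_q_torsion {K L : Type*} [Field K] [Field L] [Algebra K L]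
    [FiniteDimensional K L]
    (V : ValuationSubring K) (W : ValuationSubring L)
    (hVW : W.comap (algebraMap K L) = V)
    (p : ℕ) (hp : p.Prime) [CharP (IsLocalRing.ResidueField V) p]
    {q : ℕ} (hq : q.Prime) (hqp : q ≠ p) {τ : L ≃ₐ[K] L}
    (hτ : τ ∈ ramificationGrp K W) (hord : τ ^ q = 1) : τ = 1 := by
  by_contra hne
  -- pick a with τ a ≠ a
  obtain ⟨a, ha⟩ : ∃ a : L, τ a ≠ a := by
    by_contra hall
    push_neg at hall
    exact hne (AlgEquiv.ext hall)
  have hqk : ((q : ℕ) : IsLocalRing.ResidueField W) ≠ 0 :=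
    cast_ne_zero_residue_W V W hVW p hp
      (fun hd => hqp ((Nat.prime_dvd_prime_iff_eq hp hq).mp hd).symm)
  have hqL : ((q : ℕ) : L) ≠ 0 := cast_ne_zero_L W hqk
  set c : L := ∑ i ∈ Finset.range q, (τ ^ i) a with hc
  have hτc : τ c = c := by
    rw [hc, map_sum]
    have h1 : ∀ i, τ ((τ ^ i) a) = (τ ^ (i + 1)) a := by
      intro i
      rw [pow_succ', AlgEquiv.mul_apply]
    calc (∑ i ∈ Finset.range q, τ ((τ ^ i) a))
        = ∑ i ∈ Finset.range q, (τ ^ (i + 1)) a := by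
          exact Finset.sum_congr rfl (fun i _ => h1 i)
      _ = ∑ i ∈ Finset.range (q + 1), (τ ^ i) a - (τ ^ 0) a := by
          rw [Finset.sum_range_succ' (fun i => (τ ^ i) a) q]
          ring
      _ = ∑ i ∈ Finset.range q, (τ ^ i) a + (τ ^ q) a - (τ ^ 0) a := by
          rw [Finset.sum_range_succ]
      _ = c := by rw [hord]; simp [hc]
  set z : L := a - c / (q : ℕ) with hz
  have hτz : τ z - z = τ a - a := by
    rw [hz, map_sub, map_div₀, hτc, map_natCast]
    ring
  have hz0 : z ≠ 0 := by
    intro h0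
    rw [h0, map_zero, sub_zero] at hτz
    exact ha (sub_eq_zero.mp hτz.symm)
  have hτiz : ∀ i : ℕ, (τ ^ i) z = (τ ^ i) a - c / (q : ℕ) := by
    intro i
    have hfix : (τ ^ i) c = c := by
      induction i with
      | zero => rfl
      | succ n ih => rw [pow_succ, AlgEquiv.mul_apply, hτc, ih]
    rw [hz, map_sub, map_div₀, hfix, map_natCast]
  have hsum : ∑ i ∈ Finset.range q, (τ ^ i) z = 0 := by
    have : ∑ i ∈ Finset.range q, (τ ^ i) z
        = (∑ i ∈ Finset.range q, (τ ^ i) a) - q * (c / (q : ℕ)) := by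
      rw [Finset.sum_congr rfl (fun i _ => hτiz i), Finset.sum_sub_distrib,
        Finset.sum_const, Finset.card_range, nsmul_eq_mul]
    rw [this, ← hc, mul_div_cancel₀ c hqL, sub_self]
  -- now pass to residues
  have hmem : ∀ i : ℕ, (τ ^ i) z / z ∈ W := fun i =>
    div_mem_of_inertia W (pow_mem hτ.1 i) z
  set U : ℕ → W := fun i => ⟨(τ ^ i) z / z, hmem i⟩ with hU
  have hUsum : ∑ i ∈ Finset.range q, U i = 0 := by
    apply Subtype.ext
    push_cast
    rw [← Finset.sum_div, hsum, zero_div]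
  have hres : ∀ i : ℕ, IsLocalRing.residue W (U i) = 1 := by
    intro i
    have hpowR : τ ^ i ∈ ramificationGrp K W := pow_mem hτ i
    have := (mem_ramification_iff W (τ ^ i)).mp hpowR
    have h1 := this.2 z hz0
    rw [theta_def W (hmem i)] at h1
    exact h1
  have : ((q : ℕ) : IsLocalRing.ResidueField W) = 0 := by
    calc ((q : ℕ) : IsLocalRing.ResidueField W)
        = ∑ i ∈ Finset.range q, (1 : IsLocalRing.ResidueField W) := by
          rw [Finset.sum_const, Finset.card_range, nsmul_eq_mul, mul_one]
      _ = ∑ i ∈ Finset.range q, IsLocalRing.residue W (U i) :=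
          (Finset.sum_congr rfl (fun i _ => (hres i).symm))
      _ = IsLocalRing.residue W (∑ i ∈ Finset.range q, U i) := (map_sum _ _ _).symm
      _ = 0 := by rw [hUsum, map_zero]
  exact hqk this

/-- Every element of the ramification group has `p`-power order. -/
lemma ram_pow_p {K L : Type*} [Field K] [Field L] [Algebra K L]
    [FiniteDimensional K L]
    (V : ValuationSubring K) (W : ValuationSubring L)
    (hVW : W.comap (algebraMap K L) = V)
    (p : ℕ) (hp : p.Prime) [CharP (IsLocalRing.ResidueField V) p]
    {σ : L ≃ₐ[K] L} (hσ : σ ∈ ramificationGrp K W) :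
    ∃ k : ℕ, σ ^ p ^ k = 1 := by
  have hn0 : orderOf σ ≠ 0 := (orderOf_pos σ).ne'
  have hprime : ∀ {d : ℕ}, d.Prime → d ∣ orderOf σ → d = p := by
    intro d hd hdvd
    by_contra hdp
    have hτq : (σ ^ (orderOf σ / d)) ^ d = 1 := by
      rw [← pow_mul, Nat.div_mul_cancel hdvd, pow_orderOf_eq_one]
    have hτR : σ ^ (orderOf σ / d) ∈ ramificationGrp K W := pow_mem hσ _
    have hone := no_q_torsion V W hVW p hp hd hdp hτR hτq
    have hordτ : orderOf (σ ^ (orderOf σ / d)) = d := by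
      have hd0 : orderOf σ / d ≠ 0 :=
        (Nat.div_pos (Nat.le_of_dvd (Nat.pos_of_ne_zero hn0) hdvd) hd.pos).ne'
      rw [orderOf_pow' σ hd0, Nat.gcd_eq_right (Nat.div_dvd_of_dvd hdvd),
        Nat.div_div_self hdvd hn0]
    rw [hone, orderOf_one] at hordτ
    exact hd.one_lt.ne' hordτ.symm
  have hn := Nat.eq_prime_pow_of_unique_prime_dvd hn0 hprime
  exact ⟨_, by rw [← hn]; exact pow_orderOf_eq_one σ⟩

end Aux

/-- for a finite Galois extension `L/K` with group `G`, a valuation subring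
`W` of `L` lying over `V ⊆ K` of residue characteristic `p > 0`, with inertia group `T`
and ramification group `R`: `R ≤ T`, `R` is the unique `p`-Sylow subgroup of `T`, and
`T/R` is abelian (all commutators of elements of `T` lie in `R`) of order prime to `p`. -/
theorem ramification_group_is_unique_p_sylow
    {K L : Type*} [Field K] [Field L] [Algebra K L]
    [FiniteDimensional K L] [IsGalois K L]
    (V : ValuationSubring K) (W : ValuationSubring L)
    (hVW : W.comap (algebraMap K L) = V)
    (p : ℕ) (hp : p.Prime) [CharP (IsLocalRing.ResidueField V) p] :
    ramificationGrp K W ≤ inertiaGrp K W ∧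
    IsPGroup p ((ramificationGrp K W).subgroupOf (inertiaGrp K W)) ∧
    (∀ S : Sylow p (inertiaGrp K W),
      (S : Subgroup (inertiaGrp K W)) = (ramificationGrp K W).subgroupOf (inertiaGrp K W)) ∧
    (∀ σ τ : L ≃ₐ[K] L, σ ∈ inertiaGrp K W → τ ∈ inertiaGrp K W →
      σ * τ * σ⁻¹ * τ⁻¹ ∈ ramificationGrp K W) ∧
    ¬ p ∣ (Nat.card (inertiaGrp K W) / Nat.card (ramificationGrp K W)) := by
  classical
  haveI : Fact p.Prime := ⟨hp⟩
  haveI := charP_residue_W V W hVW p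
  have hRT : ramificationGrp K W ≤ inertiaGrp K W := fun σ hσ => hσ.1
  set R' := (ramificationGrp K W).subgroupOf (inertiaGrp K W) with hR'def
  -- commutators
  have hcomm : ∀ σ τ : L ≃ₐ[K] L, σ ∈ inertiaGrp K W → τ ∈ inertiaGrp K W →
      σ * τ * σ⁻¹ * τ⁻¹ ∈ ramificationGrp K W := by
    intro σ τ hσ hτ
    rw [mem_ramification_iff]
    refine ⟨mul_mem (mul_mem (mul_mem hσ hτ) (inv_mem hσ)) (inv_mem hτ), ?_⟩
    intro x hx
    rw [theta_mul_left W (mul_mem (mul_mem hσ hτ) (inv_mem hσ)) (inv_mem hτ) hx,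
      theta_mul_left W (mul_mem hσ hτ) (inv_mem hσ) hx,
      theta_mul_left W hσ hτ hx, theta_inv W hσ hx, theta_inv W hτ hx]
    have h1 : theta W σ x ≠ 0 := theta_ne_zero W hσ hx
    have h2 : theta W τ x ≠ 0 := theta_ne_zero W hτ hx
    field_simp
  -- normality of R' in T
  have hnormal : R'.Normal := by
    constructor
    intro n hn g
    rw [Subgroup.mem_subgroupOf] at hn ⊢
    have hco : ((g * n * g⁻¹ : inertiaGrp K W) : L ≃ₐ[K] L)
        = (g : L ≃ₐ[K] L) * (n : L ≃ₐ[K] L) * (g : L ≃ₐ[K] L)⁻¹ := by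
      push_cast
      rfl
    rw [hco]
    have key : (g : L ≃ₐ[K] L) * (n : L ≃ₐ[K] L) * (g : L ≃ₐ[K] L)⁻¹
        = ((g : L ≃ₐ[K] L) * (n : L ≃ₐ[K] L) * (g : L ≃ₐ[K] L)⁻¹
            * (n : L ≃ₐ[K] L)⁻¹) * (n : L ≃ₐ[K] L) := by
      group
    rw [key]
    exact mul_mem (hcomm _ _ g.2 n.2) hn
  haveI := hnormal
  -- p ∤ index of R'
  have hindex : ¬ p ∣ R'.index := by
    intro hdvd
    rw [Subgroup.index_eq_card] at hdvd
    obtain ⟨g, hg⟩ := exists_prime_orderOf_dvd_card' p hdvd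
    obtain ⟨σ', hσ'⟩ := QuotientGroup.mk'_surjective R' g
    have hp1 : σ' ^ p ∈ R' := by
      rw [← QuotientGroup.eq_one_iff]
      have hmk : ((σ' ^ p : inertiaGrp K W) : (inertiaGrp K W) ⧸ R')
          = (QuotientGroup.mk' R' σ') ^ p := (map_pow (QuotientGroup.mk' R') σ' p).symm
      rw [hmk, hσ', ← hg, pow_orderOf_eq_one]
    have hp0 : σ' ∉ R' := by
      intro hmem
      have hg1 : g = 1 := by
        rw [← hσ']
        exact (QuotientGroup.eq_one_iff σ').mpr hmem
      rw [hg1, orderOf_one] at hg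
      exact hp.one_lt.ne' hg.symm
    have hσT : (σ' : L ≃ₐ[K] L) ∈ inertiaGrp K W := σ'.2
    have hσpR : ((σ' : L ≃ₐ[K] L)) ^ p ∈ ramificationGrp K W := by
      rw [Subgroup.mem_subgroupOf] at hp1
      have hcoe : ((σ' ^ p : inertiaGrp K W) : L ≃ₐ[K] L)
          = ((σ' : L ≃ₐ[K] L)) ^ p := by push_cast; rfl
      rwa [hcoe] at hp1
    have hσR : (σ' : L ≃ₐ[K] L) ∉ ramificationGrp K W := fun h =>
      hp0 (Subgroup.mem_subgroupOf.mpr h)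
    rw [mem_ramification_iff] at hσR
    push_neg at hσR
    obtain ⟨x, hx0, hx1⟩ := hσR hσT
    have ha1 : theta W (σ' : L ≃ₐ[K] L) x ^ p = 1 := by
      rw [← theta_pow W hσT hx0]
      exact ((mem_ramification_iff W _).mp hσpR).2 x hx0
    have hzero : (theta W (σ' : L ≃ₐ[K] L) x - 1) ^ p = 0 := by
      rw [sub_pow_char, ha1, one_pow, sub_self]
    have hsub := pow_eq_zero_iff hp.ne_zero |>.mp hzero
    exact hx1 (by rwa [sub_eq_zero] at hsub)
  -- p-group
  have hPG : IsPGroup p R' := by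
    intro g
    obtain ⟨k, hk⟩ := ram_pow_p V W hVW p hp (Subgroup.mem_subgroupOf.mp g.2)
    refine ⟨k, ?_⟩
    apply Subtype.ext
    apply Subtype.ext
    push_cast
    exact hk
  -- Sylow uniqueness
  have hmax : ∀ {Q : Subgroup ↥(inertiaGrp K W)}, IsPGroup p Q → R' ≤ Q → Q = R' := by
    intro Q hQ hle
    obtain ⟨n, hn⟩ := IsPGroup.iff_card.mp hQ
    have hdvd1 : Nat.card Q ∣ Nat.card R' * R'.index := by
      rw [Subgroup.card_mul_index]
      exact Subgroup.card_subgroup_dvd_card Q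
    have hcop : Nat.Coprime (p ^ n) R'.index :=
      ((Nat.Prime.coprime_iff_not_dvd hp).mpr hindex).pow_left n
    have hdvd2 : Nat.card Q ∣ Nat.card R' := by
      rw [hn] at hdvd1 ⊢
      exact Nat.Coprime.dvd_of_dvd_mul_right hcop hdvd1
    exact (Subgroup.eq_of_le_of_card_ge hle (Nat.le_of_dvd Nat.card_pos hdvd2)).symm
  have hsylow : ∀ S : Sylow p ↥(inertiaGrp K W),
      (S : Subgroup ↥(inertiaGrp K W)) = R' := by
    intro S
    let RS : Sylow p ↥(inertiaGrp K W) :=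
      ⟨R', hPG, fun {Q} hQ hle => hmax hQ hle⟩
    haveI : Unique (Sylow p ↥(inertiaGrp K W)) := Sylow.unique_of_normal RS hnormal
    have hS : S = RS := Subsingleton.elim S RS
    rw [hS]
  -- index computation
  have hcardR : Nat.card R' = Nat.card ↥(ramificationGrp K W) :=
    Nat.card_congr (Subgroup.subgroupOfEquivOfLe hRT).toEquiv
  have hdiv : Nat.card ↥(inertiaGrp K W) / Nat.card ↥(ramificationGrp K W) = R'.index := by
    rw [← Subgroup.card_mul_index R', ← hcardR,
      Nat.mul_div_cancel_left _ Nat.card_pos]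
  exact ⟨hRT, hPG, hsylow, hcomm, by rw [hdiv]; exact hindex⟩
end

section
/- A composed valuation ring is henselian if and only if both constituents are: let V ⊆ V₁ be valuation rings of a field K with V local having maximal ideal contained in V₁, so that the image V̄ of V in the residue field k₁ of V₁ is a valuation ring of k₁ with V = preimage of V̄ under V₁ → k₁. Then V is henselian if and only if both V₁ and V̄ are henselian. -/
set_option synthInstance.maxHeartbeats 1000000
set_option maxHeartbeats 2000000

open Polynomial IsLocalRing

namespace CompHensel

variable {K : Type*} [Field K] (V₁ : ValuationSubring K)
  (Vbar : ValuationSubring (IsLocalRing.ResidueField V₁))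

/-- The composed subring. -/
abbrev A : Subring K := (Vbar.toSubring.comap (IsLocalRing.residue V₁)).map V₁.toSubring.subtype

variable {V₁ Vbar}

lemma mem_A {x : K} : x ∈ A V₁ Vbar ↔ ∃ h : x ∈ V₁, residue V₁ ⟨x, h⟩ ∈ Vbar := by
  constructor
  · rintro ⟨y, hy, rfl⟩
    exact ⟨y.2, hy⟩
  · rintro ⟨h, hres⟩
    exact ⟨⟨x, h⟩, hres, rfl⟩

lemma A_le : A V₁ Vbar ≤ V₁.toSubring := by
  rintro x ⟨y, hy, rfl⟩; exact y.2

/-- units in a subring of a field -/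
lemma isUnit_subring_iff {S : Subring K} (x : S) :
    IsUnit x ↔ (x : K) ≠ 0 ∧ ((x : K)⁻¹ ∈ S) := by
  constructor
  · rintro ⟨⟨a, b, hab, hba⟩, rfl⟩
    have hab' : (a : K) * (b : K) = 1 := by exact_mod_cast congrArg (Subtype.val) hab
    have ha : (a : K) ≠ 0 := by
      intro h; rw [h, zero_mul] at hab'; exact zero_ne_one hab'
    refine ⟨ha, ?_⟩
    have : (a : K)⁻¹ = (b : K) := (eq_inv_of_mul_eq_one_right hab').symm
    rw [this]; exact b.2
  · rintro ⟨h0, hinv⟩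
    exact isUnit_iff_exists_inv.2 ⟨⟨(x : K)⁻¹, hinv⟩, Subtype.ext (mul_inv_cancel₀ h0)⟩

lemma mem_maximalIdeal_V₁_iff (z : V₁) : z ∈ maximalIdeal V₁ ↔ residue V₁ z = 0 :=
  Iff.symm Ideal.Quotient.eq_zero_iff_mem

lemma mem_A_of_mem_m₁ {z : V₁} (hz : z ∈ maximalIdeal V₁) : (z : K) ∈ A V₁ Vbar :=
  mem_A.2 ⟨z.2, by rw [show (⟨(z : K), z.2⟩ : V₁) = z from rfl,
    (mem_maximalIdeal_V₁_iff z).1 hz]; exact zero_mem _⟩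

lemma inv_aux {x : K} (hx : x ∈ V₁) (hu : IsUnit (⟨x, hx⟩ : V₁))
    (h : residue V₁ ⟨x, hx⟩ ∉ Vbar) : x⁻¹ ∈ A V₁ Vbar := by
  obtain ⟨h0, hinv⟩ := (isUnit_subring_iff (S := V₁.toSubring) ⟨x, hx⟩).1 hu
  refine mem_A.2 ⟨hinv, ?_⟩
  have hmul : (⟨x, hx⟩ : V₁) * ⟨x⁻¹, hinv⟩ = 1 := Subtype.ext (mul_inv_cancel₀ h0)
  have hres : residue V₁ ⟨x, hx⟩ * residue V₁ ⟨x⁻¹, hinv⟩ = 1 := by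
    rw [← map_mul, hmul, map_one]
  have h2 : residue V₁ ⟨x⁻¹, hinv⟩ = (residue V₁ ⟨x, hx⟩)⁻¹ :=
    eq_inv_of_mul_eq_one_left (by rw [mul_comm] at hres; exact hres)
  rw [h2]
  rcases Vbar.mem_or_inv_mem (residue V₁ ⟨x, hx⟩) with h' | h'
  · exact absurd h' h
  · exact h'

/-- The composed ring is a valuation subring. -/
def AV : ValuationSubring K where
  toSubring := A V₁ Vbar
  mem_or_inv_mem' := by
    intro x
    by_cases hx : x ∈ A V₁ Vbar
    · exact Or.inl hx
    right
    have hx0 : x ≠ 0 := fun h => hx (h ▸ zero_mem _)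
    rcases V₁.mem_or_inv_mem x with hx1 | hx1
    · -- x ∈ V₁ but residue x ∉ Vbar
      have hres : residue V₁ ⟨x, hx1⟩ ∉ Vbar := fun h => hx (mem_A.2 ⟨hx1, h⟩)
      have hunit : IsUnit (⟨x, hx1⟩ : V₁) := by
        by_contra h
        exact hres (((mem_maximalIdeal_V₁_iff _).1 ((mem_maximalIdeal _).2 h)) ▸ zero_mem _)
      exact inv_aux hx1 hunit hres
    · -- x⁻¹ ∈ V₁
      by_cases hu : IsUnit (⟨x⁻¹, hx1⟩ : V₁)
      · -- then x ∈ V₁ as well, contradiction route via inv_aux on x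
        obtain ⟨_, hinv⟩ := (isUnit_subring_iff (S := V₁.toSubring) ⟨x⁻¹, hx1⟩).1 hu
        rw [inv_inv] at hinv
        have hres : residue V₁ ⟨x, hinv⟩ ∉ Vbar := fun h => hx (mem_A.2 ⟨hinv, h⟩)
        have hunit : IsUnit (⟨x, hinv⟩ : V₁) :=
          (isUnit_subring_iff (S := V₁.toSubring) ⟨x, hinv⟩).2 ⟨hx0, hx1⟩
        exact inv_aux hinv hunit hres
      · exact mem_A_of_mem_m₁ ((mem_maximalIdeal _).2 hu)

instance : IsLocalRing (A V₁ Vbar) := (AV (V₁ := V₁) (Vbar := Vbar)).toLocalSubring.2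

end CompHensel

namespace CompHensel

variable {K : Type*} [Field K] {V₁ : ValuationSubring K}
  {Vbar : ValuationSubring (IsLocalRing.ResidueField V₁)}

/-- inclusion of A into V₁ -/
def incl : A V₁ Vbar →+* V₁ := Subring.inclusion A_le

@[simp] lemma incl_val (x : A V₁ Vbar) : ((incl x : V₁) : K) = (x : K) := rfl

lemma residue_incl_mem (x : A V₁ Vbar) : residue V₁ (incl x) ∈ Vbar.toSubring := by
  obtain ⟨h, hres⟩ := mem_A.1 x.2
  have : (incl x : V₁) = ⟨(x : K), h⟩ := Subtype.ext rfl
  rw [this]; exact hres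

variable (V₁) in
/-- the surjection A → Vbar -/
noncomputable def rho : A V₁ Vbar →+* Vbar.toSubring :=
  ((residue V₁).comp (incl (V₁ := V₁) (Vbar := Vbar))).codRestrict Vbar.toSubring residue_incl_mem

@[simp] lemma rho_val (x : A V₁ Vbar) : (rho V₁ x : ResidueField V₁) = residue V₁ (incl x) := rfl

lemma rho_surjective : Function.Surjective (rho V₁ (Vbar := Vbar)) := by
  rintro ⟨t, ht⟩
  obtain ⟨z, rfl⟩ := Ideal.Quotient.mk_surjective (I := maximalIdeal V₁) t
  have hz : (z : K) ∈ A V₁ Vbar := mem_A.2 ⟨z.2, by rw [show (⟨(z : K), z.2⟩ : V₁) = z from rfl]; exact ht⟩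
  exact ⟨⟨(z : K), hz⟩, Subtype.ext rfl⟩

lemma rho_eq_zero_iff (x : A V₁ Vbar) : rho V₁ x = 0 ↔ incl x ∈ maximalIdeal V₁ := by
  rw [mem_maximalIdeal_V₁_iff]
  exact ⟨fun h => by simpa using congrArg (Subtype.val) h, fun h => Subtype.ext (by simpa using h)⟩

lemma isUnit_of_isUnit_rho {x : A V₁ Vbar} (h : IsUnit (rho V₁ x)) : IsUnit x := by
  have h0 : (rho V₁ x : ResidueField V₁) ≠ 0 := by
    intro hh
    rw [show (0 : ResidueField V₁) = ((0 : Vbar.toSubring) : ResidueField V₁) from rfl] at hh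
    exact (by simpa [Subtype.ext hh] using h : IsUnit (0 : Vbar.toSubring)).ne_zero rfl
  -- incl x is a unit of V₁
  have hm : incl x ∉ maximalIdeal V₁ := fun hm => h0 ((rho_eq_zero_iff x).2 hm ▸ rfl)
  have hu : IsUnit (incl x) := by
    by_contra hc; exact hm ((mem_maximalIdeal _).2 hc)
  obtain ⟨hx0, hxinv⟩ := (isUnit_subring_iff (S := V₁.toSubring) (incl x)).1 hu
  rw [incl_val] at hx0 hxinv
  refine (isUnit_subring_iff x).2 ⟨hx0, mem_A.2 ⟨hxinv, ?_⟩⟩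
  -- residue of inverse is inverse of residue, which is in Vbar since rho V₁ x is a unit of Vbar
  obtain ⟨hr0, hrinv⟩ := (isUnit_subring_iff (S := Vbar.toSubring) (rho V₁ x)).1 h
  have hmul : (incl x) * ⟨(x : K)⁻¹, hxinv⟩ = 1 := Subtype.ext (by simpa using mul_inv_cancel₀ hx0)
  have : residue V₁ (incl x) * residue V₁ ⟨(x : K)⁻¹, hxinv⟩ = 1 := by rw [← map_mul, hmul, map_one]
  have h2 : residue V₁ ⟨(x : K)⁻¹, hxinv⟩ = (residue V₁ (incl x))⁻¹ :=
    eq_inv_of_mul_eq_one_right this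
  rw [h2]
  exact hrinv

lemma isUnit_rho_of_isUnit {x : A V₁ Vbar} (h : IsUnit x) : IsUnit (rho V₁ x) := h.map _

lemma not_isUnit_of_incl_mem {x : A V₁ Vbar} (h : incl x ∈ maximalIdeal V₁) : ¬ IsUnit x := by
  intro hu
  exact ((rho_eq_zero_iff x).2 h ▸ isUnit_rho_of_isUnit hu).ne_zero rfl

lemma mem_mA_iff {x : A V₁ Vbar} : x ∈ maximalIdeal (A V₁ Vbar) ↔ ¬ IsUnit x :=
  IsLocalRing.mem_maximalIdeal x

/-- a unit plus a maximal-ideal element is a unit (in a local ring) -/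
lemma isUnit_of_sub_mem {R : Type*} [CommRing R] [IsLocalRing R] {u x : R}
    (hu : IsUnit u) (h : x - u ∈ maximalIdeal R) : IsUnit x := by
  by_contra hx
  have hxm : x ∈ maximalIdeal R := (IsLocalRing.mem_maximalIdeal x).2 hx
  have : u ∈ maximalIdeal R := by
    have := Ideal.sub_mem _ hxm h
    simpa using this
  exact (IsLocalRing.mem_maximalIdeal u).1 this hu

end CompHensel

namespace CompHensel

variable {K : Type*} [Field K] {V₁ : ValuationSubring K}
  {Vbar : ValuationSubring (IsLocalRing.ResidueField V₁)}

lemma incl_injective : Function.Injective (incl (V₁ := V₁) (Vbar := Vbar)) :=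
  by
  intro x y h
  have h2 := congrArg Subtype.val h
  exact Subtype.ext h2

theorem dir1 (hA : HenselianLocalRing (A V₁ Vbar)) : HenselianLocalRing Vbar.toSubring := by
  haveI : IsLocalRing Vbar.toSubring := Vbar.toLocalSubring.2
  constructor
  intro f hf a₀ h1 h2
  obtain ⟨F, hFmap, -, hFmonic⟩ :=
    Polynomial.lifts_and_degree_eq_and_monic
      ((Polynomial.mem_lifts f).2 (Polynomial.map_surjective _ rho_surjective f)) hf
  obtain ⟨α, hα⟩ := rho_surjective (V₁ := V₁) (Vbar := Vbar) a₀
  have hevF : rho V₁ (F.eval α) = f.eval a₀ := by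
    rw [← Polynomial.eval₂_at_apply, ← Polynomial.eval_map, hFmap, hα]
  have hevF' : rho V₁ (F.derivative.eval α) = f.derivative.eval a₀ := by
    rw [← Polynomial.eval₂_at_apply, ← Polynomial.eval_map, ← Polynomial.derivative_map, hFmap, hα]
  have hm : F.eval α ∈ maximalIdeal (A V₁ Vbar) := by
    rw [mem_maximalIdeal, mem_nonunits_iff]
    intro hu
    exact mem_nonunits_iff.1 ((mem_maximalIdeal _).1 h1) (hevF ▸ isUnit_rho_of_isUnit hu)
  have hu : IsUnit (F.derivative.eval α) := isUnit_of_isUnit_rho (hevF' ▸ h2)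
  obtain ⟨a, ha, ham⟩ := hA.is_henselian F hFmonic α hm hu
  refine ⟨rho V₁ a, ?_, ?_⟩
  · show f.eval (rho V₁ a) = 0
    rw [← hFmap, Polynomial.eval_map, Polynomial.eval₂_at_apply,
      show Polynomial.eval a F = 0 from ha, map_zero]
  · rw [mem_maximalIdeal, mem_nonunits_iff]
    have heq : rho V₁ a - a₀ = rho V₁ (a - α) := by rw [map_sub, hα]
    rw [heq]
    intro hu2
    exact mem_nonunits_iff.1 ((mem_maximalIdeal _).1 ham) (isUnit_of_isUnit_rho hu2)

theorem dir3 (h1h : HenselianLocalRing V₁) (h2h : HenselianLocalRing Vbar.toSubring) :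
    HenselianLocalRing (A V₁ Vbar) := by
  constructor
  intro f hf α h1 h2
  set fb := f.map (rho V₁) with hfb
  have hfbm : fb.Monic := hf.map _
  have hb1 : fb.eval (rho V₁ α) ∈ maximalIdeal Vbar.toSubring := by
    rw [hfb, Polynomial.eval_map, Polynomial.eval₂_at_apply, mem_maximalIdeal, mem_nonunits_iff]
    intro hu
    exact mem_nonunits_iff.1 ((mem_maximalIdeal _).1 h1) (isUnit_of_isUnit_rho hu)
  have hb2 : IsUnit (fb.derivative.eval (rho V₁ α)) := by
    rw [hfb, Polynomial.derivative_map, Polynomial.eval_map, Polynomial.eval₂_at_apply]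
    exact isUnit_rho_of_isUnit h2
  obtain ⟨βb, hβb, hβbm⟩ := h2h.is_henselian fb hfbm (rho V₁ α) hb1 hb2
  obtain ⟨β, rfl⟩ := rho_surjective βb
  have hfβ : rho V₁ (f.eval β) = 0 := by
    rw [← Polynomial.eval₂_at_apply, ← Polynomial.eval_map, ← hfb]; exact hβb
  have hfβm₁ : incl (f.eval β) ∈ maximalIdeal V₁ := (rho_eq_zero_iff _).1 hfβ
  have hfdβ : IsUnit (f.derivative.eval β) := by
    apply isUnit_of_isUnit_rho
    have heq : rho V₁ (f.derivative.eval β) = fb.derivative.eval (rho V₁ β) := by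
      rw [hfb, Polynomial.derivative_map, Polynomial.eval_map, Polynomial.eval₂_at_apply]
    rw [heq]
    obtain ⟨t, ht⟩ := Polynomial.sub_dvd_eval_sub (rho V₁ β) (rho V₁ α) fb.derivative
    apply isUnit_of_sub_mem hb2
    rw [ht]
    exact Ideal.mul_mem_right _ _ hβbm
  set f₁ := f.map (incl (V₁ := V₁) (Vbar := Vbar)) with hf₁
  have h₁1 : f₁.eval (incl β) ∈ maximalIdeal V₁ := by
    rw [hf₁, Polynomial.eval_map, Polynomial.eval₂_at_apply]; exact hfβm₁
  have h₁2 : IsUnit (f₁.derivative.eval (incl β)) := by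
    rw [hf₁, Polynomial.derivative_map, Polynomial.eval_map, Polynomial.eval₂_at_apply]
    exact hfdβ.map _
  obtain ⟨a₁, ha₁, ha₁m⟩ := h1h.is_henselian f₁ (hf.map _) (incl β) h₁1 h₁2
  have haA : (a₁ : K) ∈ A V₁ Vbar := by
    have heq : (a₁ : K) = ((a₁ - incl β : V₁) : K) + (β : K) := by
      push_cast [incl_val]; ring
    rw [heq]
    exact add_mem (mem_A_of_mem_m₁ ha₁m) β.2
  refine ⟨⟨(a₁ : K), haA⟩, ?_, ?_⟩
  · show f.eval _ = 0
    apply incl_injective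
    have hia : incl (⟨(a₁ : K), haA⟩ : A V₁ Vbar) = a₁ := Subtype.ext rfl
    rw [map_zero, ← Polynomial.eval₂_at_apply (incl (V₁ := V₁) (Vbar := Vbar)), hia,
      ← Polynomial.eval_map, ← hf₁]
    exact ha₁
  · have hsplit : (⟨(a₁ : K), haA⟩ : A V₁ Vbar) - α
        = ((⟨(a₁ : K), haA⟩ : A V₁ Vbar) - β) + (β - α) := by ring
    rw [hsplit]
    apply Ideal.add_mem
    · rw [mem_maximalIdeal, mem_nonunits_iff]
      apply not_isUnit_of_incl_mem
      have : incl ((⟨(a₁ : K), haA⟩ : A V₁ Vbar) - β) = a₁ - incl β := by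
        rw [map_sub]; rfl
      rw [this]
      exact ha₁m
    · rw [mem_maximalIdeal, mem_nonunits_iff]
      intro hu
      have := isUnit_rho_of_isUnit hu
      rw [map_sub] at this
      exact mem_nonunits_iff.1 ((mem_maximalIdeal _).1 hβbm) this

end CompHensel

namespace CompHensel

variable {K : Type*} [Field K] {V₁ : ValuationSubring K}
  {Vbar : ValuationSubring (IsLocalRing.ResidueField V₁)}

theorem dir2 (hA : HenselianLocalRing (A V₁ Vbar)) : HenselianLocalRing V₁ := by
  constructor
  intro f hf a₀ h1 h2
  by_cases hc0 : f.eval a₀ = 0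
  · exact ⟨a₀, hc0, by simp⟩
  have hn1 : 1 ≤ f.natDegree := by
    by_contra hlt
    push_neg at hlt
    have h0deg : f.natDegree = 0 := by omega
    obtain ⟨x, hx⟩ := Polynomial.natDegree_eq_zero.1 h0deg
    rw [← hx] at h2
    simp at h2
  set n := f.natDegree with hn
  set ι : V₁ →+* K := V₁.toSubring.subtype with hι
  set ιA : A V₁ Vbar →+* K := (A V₁ Vbar).subtype with hιA
  set c : V₁ := f.eval a₀ with hc
  have hcm : c ∈ maximalIdeal V₁ := h1
  set cK : K := ι c with hcK
  have hcK0 : cK ≠ 0 := fun h => hc0 (Subtype.ext h)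
  set u : V₁ˣ := h2.unit with hu
  have huval : (u : V₁) = f.derivative.eval a₀ := rfl
  set uK : K := ι (u : V₁) with huK
  have huKmul : uK * ι ((u⁻¹ : V₁ˣ) : V₁) = 1 := by
    rw [← map_mul, u.mul_inv, map_one]
  have huK0 : uK ≠ 0 := left_ne_zero_of_mul_eq_one huKmul
  have huKinv : ι ((u⁻¹ : V₁ˣ) : V₁) = uK⁻¹ := eq_inv_of_mul_eq_one_right huKmul
  -- Taylor expansion of f at a₀ (over V₁)
  set T : Polynomial V₁ := Polynomial.taylor a₀ f with hT
  have hT0 : T.coeff 0 = c := Polynomial.taylor_coeff_zero a₀ f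
  have hT1 : T.coeff 1 = (u : V₁) := Polynomial.taylor_coeff_one a₀ f
  -- auxiliary elements
  set e : ℕ → V₁ := fun i => T.coeff i * ((u⁻¹ : V₁ˣ) : V₁) ^ i * c ^ (i - 1) with he
  have hem : ∀ i, 2 ≤ i → e i ∈ maximalIdeal V₁ := fun i hi =>
    Ideal.mul_mem_left _ _ (Ideal.pow_mem_of_mem _ hcm _ (by omega))
  set tA : ℕ → A V₁ Vbar := fun i =>
    if hi : 2 ≤ i then ⟨ι (e i), mem_A_of_mem_m₁ (hem i hi)⟩ else 1 with htA
  have hrho_tA : ∀ i, 2 ≤ i → rho V₁ (tA i) = 0 := by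
    intro i hi
    rw [htA]
    simp only [dif_pos hi]
    rw [rho_eq_zero_iff]
    have heq : incl (⟨ι (e i), mem_A_of_mem_m₁ (hem i hi)⟩ : A V₁ Vbar) = e i := Subtype.ext rfl
    rw [heq]
    exact hem i hi
  -- the reversed polynomial over A
  set g : Polynomial (A V₁ Vbar) :=
    ∑ i ∈ Finset.range (n + 1), Polynomial.C (tA i) * Polynomial.X ^ (n - i) with hg
  have hgmonic : g.Monic := by
    apply Polynomial.monic_of_natDegree_le_of_coeff_eq_one n
    · exact Polynomial.natDegree_sum_le_of_forall_le _ _ fun i _ =>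
        (Polynomial.natDegree_C_mul_X_pow_le _ _).trans (Nat.sub_le n i)
    · rw [hg, Polynomial.finset_sum_coeff,
        Finset.sum_congr rfl fun i _ => Polynomial.coeff_C_mul_X_pow (tA i) (n - i) n]
      rw [Finset.sum_eq_single 0]
      · simp [htA]
      · intro i hi hi0
        rw [if_neg]
        rw [Finset.mem_range] at hi
        omega
      · intro h0
        exact absurd (Finset.mem_range.2 (by omega)) h0
  have hgev : ∀ x : A V₁ Vbar,
      g.eval x = ∑ i ∈ Finset.range (n + 1), tA i * x ^ (n - i) := by
    intro x
    rw [hg, Polynomial.eval_finset_sum]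
    simp
  have hgev' : ∀ x : A V₁ Vbar,
      g.derivative.eval x
        = ∑ i ∈ Finset.range (n + 1), tA i * ((n - i : ℕ) : A V₁ Vbar) * x ^ (n - i - 1) := by
    intro x
    rw [hg, Polynomial.derivative_sum, Polynomial.eval_finset_sum]
    apply Finset.sum_congr rfl
    intro i _
    rw [Polynomial.derivative_C_mul_X_pow]
    simp
  -- Hensel hypotheses at -1
  have hev1 : rho V₁ (g.eval (-1)) = 0 := by
    rw [hgev, map_sum]
    rw [Finset.sum_congr rfl (g := fun i =>
        (if i = 0 then (-1 : Vbar.toSubring) ^ (n - i) else 0)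
          + (if i = 1 then (-1 : Vbar.toSubring) ^ (n - i) else 0))]
    · rw [Finset.sum_add_distrib, Finset.sum_ite_eq' (Finset.range (n + 1)) 0,
        Finset.sum_ite_eq' (Finset.range (n + 1)) 1]
      have h0r : (0 : ℕ) ∈ Finset.range (n + 1) := Finset.mem_range.2 (by omega)
      have h1r : (1 : ℕ) ∈ Finset.range (n + 1) := Finset.mem_range.2 (by omega)
      rw [if_pos h0r, if_pos h1r]
      obtain ⟨m, hm⟩ : ∃ m, n = m + 1 := ⟨n - 1, by omega⟩
      rw [hm]
      simp [pow_succ]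
    · intro i hi
      rcases Nat.lt_or_ge i 2 with h2' | h2'
      · interval_cases i
        · simp [htA]
        · simp [htA]
      · rw [map_mul, hrho_tA i h2', zero_mul, if_neg (by omega), if_neg (by omega), add_zero]
  have hm1 : g.eval (-1) ∈ maximalIdeal (A V₁ Vbar) := by
    rw [mem_maximalIdeal, mem_nonunits_iff]
    intro hu'
    exact (hev1 ▸ isUnit_rho_of_isUnit hu').ne_zero rfl
  have hev2 : rho V₁ (g.derivative.eval (-1))
      = ((n : ℕ) : Vbar.toSubring) * (-1) ^ (n - 1)
        + ((n - 1 : ℕ) : Vbar.toSubring) * (-1) ^ (n - 1 - 1) := by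
    rw [hgev', map_sum]
    rw [Finset.sum_congr rfl (g := fun i =>
        (if i = 0 then ((n - i : ℕ) : Vbar.toSubring) * (-1) ^ (n - i - 1) else 0)
          + (if i = 1 then ((n - i : ℕ) : Vbar.toSubring) * (-1) ^ (n - i - 1) else 0))]
    · rw [Finset.sum_add_distrib, Finset.sum_ite_eq' (Finset.range (n + 1)) 0,
        Finset.sum_ite_eq' (Finset.range (n + 1)) 1]
      have h0r : (0 : ℕ) ∈ Finset.range (n + 1) := Finset.mem_range.2 (by omega)
      have h1r : (1 : ℕ) ∈ Finset.range (n + 1) := Finset.mem_range.2 (by omega)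
      rw [if_pos h0r, if_pos h1r]
      norm_num [mul_comm]
    · intro i hi
      rcases Nat.lt_or_ge i 2 with h2' | h2'
      · interval_cases i
        · simp [htA, mul_comm]
        · simp [htA, mul_comm]
      · rw [map_mul, map_mul, hrho_tA i h2', zero_mul, zero_mul,
          if_neg (by omega), if_neg (by omega), add_zero]
  have hm2 : IsUnit (g.derivative.eval (-1)) := by
    apply isUnit_of_isUnit_rho
    rw [hev2]
    rcases Nat.lt_or_ge n 2 with h2' | h2'
    · have hn1' : n = 1 := by omega
      rw [hn1']
      norm_num
    · obtain ⟨m, hm⟩ : ∃ m, n = m + 2 := ⟨n - 2, by omega⟩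
      have : ((n : ℕ) : Vbar.toSubring) * (-1) ^ (n - 1)
          + ((n - 1 : ℕ) : Vbar.toSubring) * (-1) ^ (n - 1 - 1) = (-1) ^ (m + 1) := by
        rw [hm]
        have h1' : m + 2 - 1 = m + 1 := by omega
        have h2'' : m + 1 - 1 = m := by omega
        rw [h1', h2'']
        push_cast
        ring
      rw [this]
      exact (isUnit_one.neg).pow _
  obtain ⟨b, hb, hbm⟩ := hA.is_henselian g hgmonic (-1) hm1 hm2
  have hbu : IsUnit b := isUnit_of_sub_mem isUnit_one.neg hbm
  obtain ⟨hb0, hbinv⟩ := (isUnit_subring_iff b).1 hbu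
  set bK : K := (b : K) with hbK
  -- the root
  set d : V₁ := c * ((u⁻¹ : V₁ˣ) : V₁) * ⟨bK⁻¹, A_le hbinv⟩ with hd
  have hdm : d ∈ maximalIdeal V₁ := Ideal.mul_mem_right _ _ (Ideal.mul_mem_right _ _ hcm)
  refine ⟨a₀ + d, ?_, by simpa using hdm⟩
  -- show f.eval (a₀ + d) = 0
  have hsum0 : ∑ i ∈ Finset.range (n + 1), ((tA i : K) * bK ^ (n - i)) = 0 := by
    have h0 : ιA (g.eval b) = 0 := by rw [show g.eval b = 0 from hb, map_zero]
    rw [hgev, map_sum] at h0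
    rw [← h0]
    apply Finset.sum_congr rfl
    intro i _
    rw [map_mul, map_pow]
    rfl
  -- Taylor over K
  set fK : Polynomial K := f.map ι with hfK
  set TK : Polynomial K := Polynomial.taylor (ι a₀) fK with hTK
  have hTKmap : TK = T.map ι := by
    rw [hTK, hT, Polynomial.taylor_apply, Polynomial.taylor_apply, Polynomial.map_comp]
    simp
    rfl
  have hTKdeg : TK.natDegree = n := by
    rw [hTK, Polynomial.natDegree_taylor, hfK, hf.natDegree_map]
  have hTKcoeff : ∀ i, TK.coeff i = ι (T.coeff i) := by
    intro i; rw [hTKmap, Polynomial.coeff_map]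
  -- the key identity
  set sK : K := cK * uK⁻¹ * bK⁻¹ with hsK
  have hιd : ι d = sK := by
    rw [hd, map_mul, map_mul, huKinv]
    rfl
  have hkey : ι (f.eval (a₀ + d)) * bK ^ n
      = cK * ∑ i ∈ Finset.range (n + 1), ((tA i : K) * bK ^ (n - i)) := by
    have hev : ι (f.eval (a₀ + d)) = TK.eval sK := by
      rw [← Polynomial.eval₂_at_apply, ← Polynomial.eval_map, ← hfK, hTK,
        Polynomial.taylor_eval, map_add, hιd, add_comm (ι a₀)]
    rw [hev, Polynomial.eval_eq_sum_range (p := TK), hTKdeg, Finset.sum_mul, Finset.mul_sum]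
    apply Finset.sum_congr rfl
    intro i hi
    rw [Finset.mem_range] at hi
    have hin : i ≤ n := by omega
    rcases Nat.lt_or_ge i 2 with h2' | h2'
    · interval_cases i
      · -- i = 0
        have : (tA 0 : K) = 1 := by rw [htA]; simp
        rw [this, hTKcoeff, hT0]
        simp [← hcK]
      · -- i = 1
        have ht1 : (tA 1 : K) = 1 := by rw [htA]; simp
        have hbn : bK ^ n = bK ^ (n - 1) * bK := by
          rw [← pow_succ]
          congr 1
          omega
        rw [ht1, hTKcoeff, hT1, ← huK, hbn, hsK]
        field_simp
    · -- i ≥ 2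
      have hti : (tA i : K) = ι (T.coeff i) * (uK⁻¹) ^ i * cK ^ (i - 1) := by
        rw [htA]
        simp only [dif_pos h2']
        show ι (e i) = _
        rw [he]
        simp only [map_mul, map_pow, huKinv]
        rfl
      have hbn : bK ^ n = bK ^ (n - i) * bK ^ i := by
        rw [← pow_add]
        congr 1
        omega
      have hcn : cK * cK ^ (i - 1) = cK ^ i := by
        rw [← pow_succ']
        congr 1
        omega
      rw [hti, hbn, hTKcoeff,
        show cK * (ι (T.coeff i) * uK⁻¹ ^ i * cK ^ (i - 1) * bK ^ (n - i))
          = ι (T.coeff i) * uK⁻¹ ^ i * (cK * cK ^ (i - 1)) * bK ^ (n - i) by ring,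
        hcn, hsK, mul_pow, mul_pow]
      field_simp
      rw [mul_assoc, ← mul_pow, one_div, inv_mul_cancel₀ hb0, one_pow, mul_one]
  have hbn0 : bK ^ n ≠ 0 := pow_ne_zero _ hb0
  have hres := hkey
  rw [hsum0, mul_zero] at hres
  exact Subtype.ext ((mul_eq_zero.1 hres).resolve_right hbn0)

end CompHensel

/-- a composed valuation ring is henselian iff both constituents are.
Let `V₁` be a valuation subring of a field `K` with residue field `k₁`, and let `V̄` be a
valuation subring of `k₁`.  Let `V` be the preimage of `V̄` under the residue map
`V₁ → k₁` (viewed as a subring of `K`).  Then `V` is henselian if and only if both `V₁`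
and `V̄` are henselian. -/
theorem composed_valuation_henselian_iff
    {K : Type*} [Field K] (V₁ : ValuationSubring K)
    (Vbar : ValuationSubring (IsLocalRing.ResidueField V₁)) :
    HenselianLocalRing
        ((Vbar.toSubring.comap (IsLocalRing.residue V₁)).map V₁.toSubring.subtype) ↔
      (HenselianLocalRing V₁ ∧ HenselianLocalRing Vbar) := by
  constructor
  · intro hA
    exact ⟨CompHensel.dir2 hA, CompHensel.dir1 hA⟩
  · rintro ⟨h1, h2⟩
    exact CompHensel.dir3 h1 h2
end
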